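/- There exists an absolute constant c > 0 such that for every n ≥ 2, p ≥ 1, σ > 0 and Δ > 0, the minimax risk satisfies Ψ_Δ ≥ c · Φ^c(Δ/σ). -/

import Mathlib

open MeasureTheory ProbabilityTheory Filter Finset Asymptotics
open scoped ENNReal

noncomputable section

/-- Euclidean norm on `Fin p → ℝ`. -/
def eucNorm {p : ℕ} (θ : Fin p → ℝ) : ℝ := Real.sqrt (∑ i, θ i ^ 2)

/-- The set of label vectors in `{-1,1}^n`. -/
def pmOne (n : ℕ) : Set (Fin n → ℝ) := {η | ∀ i, η i = 1 ∨ η i = -1}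

/-- `sgn s = 1` if `s ≥ 0` and `-1` otherwise. -/
def sgn (s : ℝ) : ℝ := if 0 ≤ s then 1 else -1

/-- Hamming-type loss `r(a,b) = min over ν ∈ {±1} of Σ_j |a_j - ν b_j|`. -/
def lossR {n : ℕ} (a b : Fin n → ℝ) : ℝ :=
  min (∑ j, |a j - b j|) (∑ j, |a j + b j|)

/-- Law of `Y = θ ηᵀ + W`, where `W` has i.i.d. `N(0,σ²)` entries. -/
def lawY (p n : ℕ) (σ : ℝ) (θ : Fin p → ℝ) (η : Fin n → ℝ) :
    Measure (Fin p → Fin n → ℝ) :=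
  Measure.pi fun i => Measure.pi fun j => gaussianReal (θ i * η j) (σ ^ 2).toNNReal

/-- Parameter set `Ω_Δ = {θ : ‖θ‖ ≥ Δ} × {-1,1}^n`. -/
def Omega (p n : ℕ) (Δ : ℝ) : Set ((Fin p → ℝ) × (Fin n → ℝ)) :=
  {x | Δ ≤ eucNorm x.1 ∧ x.2 ∈ pmOne n}

/-- Expected loss of an estimator `f` at `(θ, η)`. -/
def risk (p n : ℕ) (σ : ℝ) (f : (Fin p → Fin n → ℝ) → Fin n → ℝ)
    (θ : Fin p → ℝ) (η : Fin n → ℝ) : ℝ :=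
  ∫ y, lossR (f y) η ∂(lawY p n σ θ η)

/-- Minimax risk `Ψ_Δ`. -/
def minimaxRisk (p n : ℕ) (σ Δ : ℝ) : ℝ :=
  ⨅ f : {f : (Fin p → Fin n → ℝ) → Fin n → ℝ // Measurable f ∧ ∀ y, f y ∈ pmOne n},
    ⨆ x : Omega p n Δ, (n : ℝ)⁻¹ * risk p n σ f.1 x.1.1 x.1.2

/-- Standard Gaussian upper tail `Φᶜ(t) = P(Z > t)`. -/
def Phic (t : ℝ) : ℝ := ((gaussianReal 0 1) {x | t < x}).toReal

/-- Signal-to-noise ratio `r_n = (Δ²/σ²)/√(Δ²/σ² + p/n)`. -/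
def snr (p n : ℕ) (σ Δ : ℝ) : ℝ :=
  (Δ ^ 2 / σ ^ 2) / Real.sqrt (Δ ^ 2 / σ ^ 2 + (p : ℝ) / n)

/-- Gaussian product measure on `Fin p → ℝ` with i.i.d. centered coordinates of variance `v`. -/
def gaussVec (p : ℕ) (v : ℝ) : Measure (Fin p → ℝ) :=
  Measure.pi fun _ => gaussianReal 0 v.toNNReal

/-- `G_σ(t, θ) = P((θ + σξ₁)ᵀ(θ + (σ/(n-1)) Σ_{j=2}^n ξ_j) ≤ ‖θ‖² t)` for i.i.d.
standard Gaussian vectors `ξ₁, …, ξ_n` in `ℝ^p`. -/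
def Gfun (p n : ℕ) (σ t : ℝ) (θ : Fin p → ℝ) : ℝ :=
  (((gaussVec p 1).prod (Measure.pi fun _ : Fin (n - 1) => gaussVec p 1))
    {ξ | ∑ i, (θ i + σ * ξ.1 i) * (θ i + σ / ((n : ℝ) - 1) * ∑ j, ξ.2 j i)
        ≤ eucNorm θ ^ 2 * t}).toReal

/-- Hollowed Gram matrix `H(YᵀY)` of the observation `y`, as a function. -/
def hollowGram {p n : ℕ} (y : Fin p → Fin n → ℝ) : Fin n → Fin n → ℝ :=
  fun a b => if a = b then 0 else ∑ i, y i a * y i b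

/-- `v` is a unit-norm eigenvector of the matrix `M` for its largest eigenvalue. -/
def IsTopEigenvector {n : ℕ} (M : Fin n → Fin n → ℝ) (v : Fin n → ℝ) : Prop :=
  eucNorm v = 1 ∧ ∃ μ : ℝ, (∀ a, ∑ b, M a b * v b = μ * v a) ∧
    ∀ μ' : ℝ, (∃ w : Fin n → ℝ, w ≠ 0 ∧ ∀ a, ∑ b, M a b * w b = μ' * w a) → μ' ≤ μ

/-- A spectral estimator: the entrywise sign of a measurable selection of a unit-norm
top eigenvector of `H(YᵀY)`. -/
def IsSpectralEstimator (p n : ℕ) (f : (Fin p → Fin n → ℝ) → Fin n → ℝ) : Prop :=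
  Measurable f ∧ ∃ v : (Fin p → Fin n → ℝ) → Fin n → ℝ, Measurable v ∧
    (∀ y, IsTopEigenvector (hollowGram y) (v y)) ∧
    ∀ y a, f y a = sgn (v y a)

/-- Lloyd iterations `η̂^{k+1}(Y) = sign(H(YᵀY) η̂^k(Y))`, started from `f0`. -/
def lloydIter {p n : ℕ} (f0 : (Fin p → Fin n → ℝ) → Fin n → ℝ) :
    ℕ → (Fin p → Fin n → ℝ) → Fin n → ℝ
  | 0 => f0
  | k + 1 => fun y a => sgn (∑ b, hollowGram y a b * lloydIter f0 k y b)

/-- Operator (spectral) norm of a real matrix with respect to Euclidean norms. -/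
def opNorm {m n : ℕ} (M : Matrix (Fin m) (Fin n) ℝ) : ℝ :=
  ‖LinearMap.toContinuousLinearMap (Matrix.toEuclideanLin M)‖

/-- `H(M)`: the matrix `M` with its diagonal entries replaced by zero. -/
def hollow {n : ℕ} (M : Matrix (Fin n) (Fin n) ℝ) : Matrix (Fin n) (Fin n) ℝ :=
  Matrix.of fun a b => if a = b then 0 else M a b

/-- Gram matrix `WᵀW` of a `p × n` array `w`. -/
def gramMat {p n : ℕ} (w : Fin p → Fin n → ℝ) : Matrix (Fin n) (Fin n) ℝ :=
  Matrix.of fun a b => ∑ i, w i a * w i b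

/-- Law of a `p × n` random matrix with i.i.d. `N(0, τ²)` entries. -/
def lawW (p n : ℕ) (τ : ℝ) : Measure (Fin p → Fin n → ℝ) :=
  Measure.pi fun _ => Measure.pi fun _ => gaussianReal 0 (τ ^ 2).toNNReal

/-- Rademacher (uniform ±1) measure on `ℝ`. -/
def rademacher : Measure ℝ :=
  (2 : ℝ≥0∞)⁻¹ • Measure.dirac (1 : ℝ) + (2 : ℝ≥0∞)⁻¹ • Measure.dirac (-1 : ℝ)

instance : IsProbabilityMeasure rademacher := by
  constructor
  simp [rademacher, Measure.add_apply, Measure.smul_apply, smul_eq_mul]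
  rw [ENNReal.inv_two_add_inv_two]

/-- i.i.d. Rademacher vector measure on `Fin n → ℝ`. -/
def radVec (n : ℕ) : Measure (Fin n → ℝ) := Measure.pi fun _ => rademacher



/-! ### Auxiliary lemmas for the minimax lower bound -/

section AuxLB

open MeasureTheory Real
open scoped NNReal

lemma phic_nonneg (t : ℝ) : 0 ≤ Phic t := ENNReal.toReal_nonneg

lemma g01_Ioi (t : ℝ) : gaussianReal 0 1 (Set.Ioi t) = ENNReal.ofReal (Phic t) := by
  rw [Phic, ENNReal.ofReal_toReal (measure_ne_top _ _)]
  rfl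

lemma sq_toNNReal_ne_zero {σ : ℝ} (hσ : 0 < σ) : (σ ^ 2).toNNReal ≠ 0 := by
  simp only [ne_eq, Real.toNNReal_eq_zero, not_le]
  positivity

lemma coe_sq_toNNReal {σ : ℝ} (hσ : 0 < σ) : (((σ ^ 2).toNNReal : ℝ≥0) : ℝ) = σ ^ 2 :=
  Real.coe_toNNReal _ (sq_nonneg σ)

lemma gaussian_eq_map (m : ℝ) {σ : ℝ} (hσ : 0 < σ) :
    gaussianReal m (σ ^ 2).toNNReal
      = (gaussianReal 0 1).map (fun x => σ * x + m) := by
  have h1 : (gaussianReal 0 1).map (σ * ·) = gaussianReal 0 (σ ^ 2).toNNReal := by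
    rw [ProbabilityTheory.gaussianReal_map_const_mul σ]
    congr 1
    · ring
    · have h0 : ((σ ^ 2).toNNReal) = (⟨σ ^ 2, sq_nonneg _⟩ : ℝ≥0) := by
        ext
        exact Real.coe_toNNReal _ (sq_nonneg σ)
      rw [h0, mul_one]
      rfl
  have h2 := ProbabilityTheory.gaussianReal_map_add_const
    (μ := 0) (v := (σ ^ 2).toNNReal) m
  rw [zero_add] at h2
  rw [← h2, ← h1,
    Measure.map_map (measurable_id'.add_const m) (measurable_id'.const_mul σ)]
  rfl


lemma g01_neg_map : (gaussianReal 0 1).map (fun x : ℝ => -x) = gaussianReal 0 1 := by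
  have h := ProbabilityTheory.gaussianReal_map_const_mul (μ := 0) (v := 1) (-1)
  have h2 : (fun x : ℝ => -x) = ((-1 : ℝ) * ·) := by funext x; ring
  rw [h2, h]
  norm_num

lemma g01_singleton (t : ℝ) : gaussianReal 0 1 {t} = 0 :=
  ProbabilityTheory.gaussianReal_absolutelyContinuous 0 one_ne_zero
    (measure_singleton t)

instance : NullSingletonClass (gaussianReal (0:ℝ) 1) := ⟨g01_singleton⟩

lemma g01_Ici (t : ℝ) : gaussianReal 0 1 (Set.Ici t) = ENNReal.ofReal (Phic t) := by
  rw [← measure_congr (Ioi_ae_eq_Ici (a := t) (μ := gaussianReal 0 1))]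
  exact g01_Ioi t

lemma g01_Iic_neg (t : ℝ) :
    gaussianReal 0 1 (Set.Iic (-t)) = ENNReal.ofReal (Phic t) := by
  conv_lhs => rw [← g01_neg_map]
  rw [Measure.map_apply measurable_neg measurableSet_Iic]
  rw [show (fun x : ℝ => -x) ⁻¹' Set.Iic (-t) = Set.Ici t by
    ext x; simp [Set.mem_Iic, Set.mem_Ici]]
  exact g01_Ici t

lemma gauss_Iic_zero {σ Δ : ℝ} (hσ : 0 < σ) (hΔ : 0 < Δ) :
    gaussianReal Δ (σ ^ 2).toNNReal (Set.Iic 0) = ENNReal.ofReal (Phic (Δ / σ)) := by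
  rw [gaussian_eq_map Δ hσ,
    Measure.map_apply (by fun_prop) measurableSet_Iic]
  rw [show (fun x => σ * x + Δ) ⁻¹' Set.Iic 0 = Set.Iic (-(Δ / σ)) by
    ext x
    simp only [Set.mem_preimage, Set.mem_Iic]
    rw [le_neg, div_le_iff₀ hσ]
    constructor <;> intro h <;> nlinarith]
  exact g01_Iic_neg (Δ / σ)

lemma gauss_Ioi_zero {σ Δ : ℝ} (hσ : 0 < σ) (hΔ : 0 < Δ) :
    gaussianReal (-Δ) (σ ^ 2).toNNReal (Set.Ioi 0) = ENNReal.ofReal (Phic (Δ / σ)) := by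
  rw [gaussian_eq_map (-Δ) hσ,
    Measure.map_apply (by fun_prop) measurableSet_Ioi]
  rw [show (fun x => σ * x + -Δ) ⁻¹' Set.Ioi 0 = Set.Ioi (Δ / σ) by
    ext x
    simp only [Set.mem_preimage, Set.mem_Ioi]
    rw [div_lt_iff₀ hσ]
    constructor <;> intro h <;> nlinarith]
  exact g01_Ioi (Δ / σ)

lemma gaussianPDF_mono {v : ℝ≥0} (hv : 0 < (v : ℝ)) {a b x : ℝ}
    (h : (x - b) ^ 2 ≤ (x - a) ^ 2) :
    ProbabilityTheory.gaussianPDF a v x ≤ ProbabilityTheory.gaussianPDF b v x := by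
  unfold ProbabilityTheory.gaussianPDF
  apply ENNReal.ofReal_le_ofReal
  unfold ProbabilityTheory.gaussianPDFReal
  apply mul_le_mul_of_nonneg_left _ (by positivity)
  apply Real.exp_le_exp.mpr
  rw [div_le_div_iff₀ (by linarith) (by linarith)]
  nlinarith [mul_le_mul_of_nonneg_right h (by linarith : (0:ℝ) ≤ 2 * (v:ℝ))]

lemma gauss_test_core {σ Δ : ℝ} (hσ : 0 < σ) (hΔ : 0 < Δ)
    (g : ℝ → ℝ≥0∞) (hg : Measurable g) (hg1 : ∀ x, g x ≤ 1) :
    ENNReal.ofReal (2 * Phic (Δ / σ)) ≤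
      (∫⁻ x, g x ∂gaussianReal Δ (σ ^ 2).toNNReal)
      + ∫⁻ x, (1 - g x) ∂gaussianReal (-Δ) (σ ^ 2).toNNReal := by
  have hv : (σ ^ 2).toNNReal ≠ 0 := sq_toNNReal_ne_zero hσ
  have hvpos : (0 : ℝ) < (((σ ^ 2).toNNReal : ℝ≥0) : ℝ) := by
    rw [coe_sq_toNNReal hσ]; positivity
  set v := (σ ^ 2).toNNReal with hvdef
  set P : ℝ → ℝ≥0∞ := ProbabilityTheory.gaussianPDF Δ v with hP
  set M : ℝ → ℝ≥0∞ := ProbabilityTheory.gaussianPDF (-Δ) v with hM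
  have hpdfP : Measurable P := ProbabilityTheory.measurable_gaussianPDF Δ v
  have hpdfM : Measurable M := ProbabilityTheory.measurable_gaussianPDF (-Δ) v
  have hgm : Measurable fun x => (1 : ℝ≥0∞) - g x := measurable_const.sub hg
  have e1 : (∫⁻ x, g x ∂gaussianReal Δ (σ ^ 2).toNNReal)
      = ∫⁻ x, P x * g x ∂volume := by
    rw [ProbabilityTheory.gaussianReal_of_var_ne_zero _ hv,
      lintegral_withDensity_eq_lintegral_mul _ hpdfP hg]
    rfl
  have e2 : (∫⁻ x, (1 - g x) ∂gaussianReal (-Δ) (σ ^ 2).toNNReal)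
      = ∫⁻ x, M x * (1 - g x) ∂volume := by
    rw [ProbabilityTheory.gaussianReal_of_var_ne_zero _ hv,
      lintegral_withDensity_eq_lintegral_mul _ hpdfM hgm]
    rfl
  rw [e1, e2]
  have hIic : MeasurableSet (Set.Iic (0 : ℝ)) := measurableSet_Iic
  rw [← lintegral_add_compl (fun x => P x * g x) hIic,
    ← lintegral_add_compl (fun x => M x * (1 - g x)) hIic, Set.compl_Iic]
  have hcomp : ∀ x : ℝ, x ≤ 0 → P x ≤ M x := by
    intro x hx
    exact gaussianPDF_mono hvpos (by nlinarith)
  have hcomp' : ∀ x : ℝ, 0 < x → M x ≤ P x := by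
    intro x hx
    exact gaussianPDF_mono hvpos (by nlinarith)
  have key1 : ∫⁻ x in Set.Ioi (0:ℝ), M x * g x
      ≤ ∫⁻ x in Set.Ioi (0:ℝ), P x * g x := by
    apply lintegral_mono_ae
    filter_upwards [MeasureTheory.self_mem_ae_restrict measurableSet_Ioi] with x hx
    exact mul_le_mul_left (hcomp' x (Set.mem_Ioi.mp hx)) _
  have key2 : ∫⁻ x in Set.Iic (0:ℝ), P x * (1 - g x)
      ≤ ∫⁻ x in Set.Iic (0:ℝ), M x * (1 - g x) := by
    apply lintegral_mono_ae
    filter_upwards [MeasureTheory.self_mem_ae_restrict measurableSet_Iic] with x hx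
    exact mul_le_mul_left (hcomp x (Set.mem_Iic.mp hx)) _
  have comb1 : (∫⁻ x in Set.Iic (0:ℝ), P x * g x)
      + (∫⁻ x in Set.Iic (0:ℝ), P x * (1 - g x))
      = ∫⁻ x in Set.Iic (0:ℝ), P x := by
    rw [← lintegral_add_left (f := fun x => P x * g x) (hpdfP.mul hg)]
    apply lintegral_congr
    intro x
    rw [← mul_add, add_tsub_cancel_of_le (hg1 x), mul_one]
  have comb2 : (∫⁻ x in Set.Ioi (0:ℝ), M x * g x)
      + (∫⁻ x in Set.Ioi (0:ℝ), M x * (1 - g x))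
      = ∫⁻ x in Set.Ioi (0:ℝ), M x := by
    rw [← lintegral_add_left (f := fun x => M x * g x) (hpdfM.mul hg)]
    apply lintegral_congr
    intro x
    rw [← mul_add, add_tsub_cancel_of_le (hg1 x), mul_one]
  have htail1 : ∫⁻ x in Set.Iic (0:ℝ), P x = ENNReal.ofReal (Phic (Δ / σ)) := by
    rw [hP, ← withDensity_apply _ hIic,
      ← ProbabilityTheory.gaussianReal_of_var_ne_zero _ hv]
    exact gauss_Iic_zero hσ hΔ
  have htail2 : ∫⁻ x in Set.Ioi (0:ℝ), M x = ENNReal.ofReal (Phic (Δ / σ)) := by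
    rw [hM, ← withDensity_apply _ measurableSet_Ioi,
      ← ProbabilityTheory.gaussianReal_of_var_ne_zero _ hv]
    exact gauss_Ioi_zero hσ hΔ
  calc ENNReal.ofReal (2 * Phic (Δ / σ))
      = ENNReal.ofReal (Phic (Δ / σ)) + ENNReal.ofReal (Phic (Δ / σ)) := by
        rw [← ENNReal.ofReal_add (phic_nonneg _) (phic_nonneg _), two_mul]
    _ ≤ ((∫⁻ x in Set.Iic (0:ℝ), P x * g x)
          + (∫⁻ x in Set.Iic (0:ℝ), P x * (1 - g x)))
        + ((∫⁻ x in Set.Ioi (0:ℝ), M x * g x)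
          + (∫⁻ x in Set.Ioi (0:ℝ), M x * (1 - g x))) := by
        rw [comb1, comb2, htail1, htail2]
    _ ≤ ((∫⁻ x in Set.Iic (0:ℝ), P x * g x)
          + (∫⁻ x in Set.Iic (0:ℝ), M x * (1 - g x)))
        + ((∫⁻ x in Set.Ioi (0:ℝ), P x * g x)
          + (∫⁻ x in Set.Ioi (0:ℝ), M x * (1 - g x))) := by
        calc _ ≤ ((∫⁻ x in Set.Iic (0:ℝ), P x * g x)
              + (∫⁻ x in Set.Iic (0:ℝ), M x * (1 - g x)))
            + ((∫⁻ x in Set.Ioi (0:ℝ), M x * g x)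
              + (∫⁻ x in Set.Ioi (0:ℝ), M x * (1 - g x))) := by gcongr
          _ ≤ _ := by gcongr
    _ = _ := by ring


lemma lintegral_one_sub {α : Type*} [MeasurableSpace α] (μ : Measure α)
    [IsProbabilityMeasure μ] {g : α → ℝ≥0∞} (hg : Measurable g)
    (hg1 : ∀ x, g x ≤ 1) :
    ∫⁻ x, (1 - g x) ∂μ = 1 - ∫⁻ x, g x ∂μ := by
  have hfin : ∫⁻ x, g x ∂μ ≠ ⊤ := by
    apply ne_of_lt
    calc ∫⁻ x, g x ∂μ ≤ ∫⁻ _, 1 ∂μ := lintegral_mono hg1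
      _ = 1 := by rw [lintegral_one, measure_univ]
      _ < ⊤ := ENNReal.one_lt_top
  rw [lintegral_sub hg hfin (Filter.Eventually.of_forall hg1), lintegral_one,
    measure_univ]

lemma pi_testing {ι : Type*} [Fintype ι] [DecidableEq ι] {α : ι → Type*}
    [∀ i, MeasurableSpace (α i)] (κ κ' : ∀ i, Measure (α i))
    [∀ i, IsProbabilityMeasure (κ i)] [∀ i, IsProbabilityMeasure (κ' i)]
    (i₀ : ι) (hk : ∀ i, i ≠ i₀ → κ i = κ' i) (ε : ℝ≥0∞)
    (H : ∀ g : α i₀ → ℝ≥0∞, Measurable g → (∀ t, g t ≤ 1) →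
      ε ≤ (∫⁻ t, g t ∂(κ i₀)) + ∫⁻ t, (1 - g t) ∂(κ' i₀)) :
    ∀ F : (∀ i, α i) → ℝ≥0∞, Measurable F → (∀ x, F x ≤ 1) →
      ε ≤ (∫⁻ x, F x ∂(Measure.pi κ)) + ∫⁻ x, (1 - F x) ∂(Measure.pi κ') := by
  intro F hF hF1
  have hne : ∀ i, Nonempty (α i) := fun i => (κ i).nonempty_of_neZero
  have x₀ : ∀ i, α i := fun i => Classical.arbitrary _
  set s : Finset ι := Finset.univ.erase i₀ with hs
  have hi₀s : i₀ ∉ s := Finset.notMem_erase i₀ _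
  have hins : insert i₀ s = Finset.univ := Finset.insert_erase (Finset.mem_univ i₀)
  have hpis : (fun i : s => κ i) = (fun i : s => κ' i) := by
    funext i
    exact hk i (Finset.ne_of_mem_erase i.2)
  set G : α i₀ → ℝ≥0∞ :=
    fun t => MeasureTheory.lmarginal κ s F (Function.update x₀ i₀ t) with hG
  have hGmeas : Measurable G :=
    (Measurable.lmarginal _ hF).comp (measurable_update x₀)
  have hmarg_le : ∀ (y : ∀ i, α i), MeasureTheory.lmarginal κ s F y ≤ 1 := by
    intro y
    unfold MeasureTheory.lmarginal
    calc ∫⁻ z : ∀ i : s, α i, F (Function.updateFinset y s z)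
          ∂(Measure.pi fun i : s => κ i)
        ≤ ∫⁻ _ : ∀ i : s, α i, 1 ∂(Measure.pi fun i : s => κ i) :=
          lintegral_mono fun z => hF1 _
      _ = 1 := by rw [lintegral_one, measure_univ]
  have hG1 : ∀ t, G t ≤ 1 := fun t => hmarg_le _
  have h1 : ∫⁻ x, F x ∂(Measure.pi κ) = ∫⁻ t, G t ∂(κ i₀) := by
    rw [MeasureTheory.lintegral_eq_lmarginal_univ (μ := κ) x₀, ← hins,
      MeasureTheory.lmarginal_insert _ hF hi₀s]
  have hF' : Measurable fun x => 1 - F x := measurable_const.sub hF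
  have h2 : ∫⁻ x, (1 - F x) ∂(Measure.pi κ') = ∫⁻ t, (1 - G t) ∂(κ' i₀) := by
    rw [MeasureTheory.lintegral_eq_lmarginal_univ (μ := κ') x₀, ← hins,
      MeasureTheory.lmarginal_insert _ hF' hi₀s]
    have key : ∀ (y : ∀ i, α i),
        MeasureTheory.lmarginal κ' s (fun x => 1 - F x) y
          = 1 - MeasureTheory.lmarginal κ' s F y := by
      intro y
      unfold MeasureTheory.lmarginal
      show (∫⁻ z : ∀ i : s, α i, (1 - F (Function.updateFinset y s z))
          ∂(Measure.pi fun i : s => κ' i)) = _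
      exact lintegral_one_sub _ (hF.comp measurable_updateFinset) (fun z => hF1 _)
    have hmargeq : ∀ y, MeasureTheory.lmarginal κ' s F y
        = MeasureTheory.lmarginal κ s F y := by
      intro y
      unfold MeasureTheory.lmarginal
      rw [hpis]
    refine lintegral_congr fun t => ?_
    rw [key, hmargeq, hG]
  rw [h1, h2]
  exact H G hGmeas hG1

lemma pi_testing_set {ι : Type*} [Fintype ι] [DecidableEq ι] {α : ι → Type*}
    [∀ i, MeasurableSpace (α i)] (κ κ' : ∀ i, Measure (α i))
    [∀ i, IsProbabilityMeasure (κ i)] [∀ i, IsProbabilityMeasure (κ' i)]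
    (i₀ : ι) (hk : ∀ i, i ≠ i₀ → κ i = κ' i) (ε : ℝ≥0∞)
    (H : ∀ g : α i₀ → ℝ≥0∞, Measurable g → (∀ t, g t ≤ 1) →
      ε ≤ (∫⁻ t, g t ∂(κ i₀)) + ∫⁻ t, (1 - g t) ∂(κ' i₀))
    (A : Set (∀ i, α i)) (hA : MeasurableSet A) :
    ε ≤ Measure.pi κ A + Measure.pi κ' Aᶜ := by
  classical
  have h := pi_testing κ κ' i₀ hk ε H (A.indicator fun _ => 1)
    (measurable_const.indicator hA)
    (fun x => by
      by_cases hx : x ∈ A <;> simp [Set.indicator_apply, hx])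
  have e1 : ∫⁻ x, A.indicator (fun _ => (1:ℝ≥0∞)) x ∂(Measure.pi κ)
      = Measure.pi κ A := by
    rw [lintegral_indicator_const hA, one_mul]
  have e2 : ∫⁻ x, (1 - A.indicator (fun _ => (1:ℝ≥0∞)) x) ∂(Measure.pi κ')
      = Measure.pi κ' Aᶜ := by
    have : (fun x => 1 - A.indicator (fun _ => (1:ℝ≥0∞)) x)
        = Aᶜ.indicator fun _ => 1 := by
      funext x
      by_cases hx : x ∈ A <;>
        simp [Set.indicator_apply, hx, Set.mem_compl_iff]
    rw [this, lintegral_indicator_const hA.compl, one_mul]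
  rw [e1, e2] at h
  exact h

lemma lawY_isProb (p n : ℕ) (σ : ℝ) (θ : Fin p → ℝ) (η : Fin n → ℝ) :
    IsProbabilityMeasure (lawY p n σ θ η) := by
  unfold lawY
  infer_instance

set_option maxHeartbeats 1000000 in
lemma lawY_testing {p n : ℕ} {σ Δ : ℝ} (hσ : 0 < σ) (hΔ : 0 < Δ)
    (i₀ : Fin p) (θ : Fin p → ℝ) (hθ : ∀ i, i ≠ i₀ → θ i = 0) (hθ0 : θ i₀ = Δ)
    (j₀ : Fin n) (η η' : Fin n → ℝ) (hηη' : ∀ j, j ≠ j₀ → η j = η' j)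
    (hpm : η j₀ = 1 ∨ η j₀ = -1) (hflip : η' j₀ = - η j₀)
    (A : Set (Fin p → Fin n → ℝ)) (hA : MeasurableSet A) :
    ENNReal.ofReal (2 * Phic (Δ / σ)) ≤ lawY p n σ θ η A + lawY p n σ θ η' Aᶜ := by
  have Hgauss : ∀ g : ℝ → ℝ≥0∞, Measurable g → (∀ t, g t ≤ 1) →
      ENNReal.ofReal (2 * Phic (Δ / σ)) ≤
        (∫⁻ t, g t ∂gaussianReal (θ i₀ * η j₀) (σ ^ 2).toNNReal)
        + ∫⁻ t, (1 - g t) ∂gaussianReal (θ i₀ * η' j₀) (σ ^ 2).toNNReal := by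
    intro g hg hg1
    rcases hpm with h1 | h1
    · have e1 : θ i₀ * η j₀ = Δ := by rw [hθ0, h1, mul_one]
      have e2 : θ i₀ * η' j₀ = -Δ := by rw [hflip, hθ0, h1]; ring
      rw [e1, e2]
      exact gauss_test_core hσ hΔ g hg hg1
    · have e1 : θ i₀ * η j₀ = -Δ := by rw [hθ0, h1]; ring
      have e2 : θ i₀ * η' j₀ = Δ := by rw [hflip, hθ0, h1]; ring
      rw [e1, e2]
      have hg' : Measurable fun t => (1:ℝ≥0∞) - g t := measurable_const.sub hg
      have hg1' : ∀ t, (1:ℝ≥0∞) - g t ≤ 1 := fun t => tsub_le_self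
      have h := gauss_test_core hσ hΔ (fun t => 1 - g t) hg' hg1'
      have hcan : (fun t => (1:ℝ≥0∞) - (1 - g t)) = g := by
        funext t
        exact ENNReal.sub_sub_cancel ENNReal.one_ne_top (hg1 t)
      rw [hcan] at h
      rw [add_comm]
      exact h
  -- inner testing: measures on Fin n → ℝ
  have Hinner : ∀ g : (Fin n → ℝ) → ℝ≥0∞, Measurable g → (∀ t, g t ≤ 1) →
      ENNReal.ofReal (2 * Phic (Δ / σ)) ≤
        (∫⁻ t, g t ∂(Measure.pi fun j => gaussianReal (θ i₀ * η j) (σ ^ 2).toNNReal))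
        + ∫⁻ t, (1 - g t)
            ∂(Measure.pi fun j => gaussianReal (θ i₀ * η' j) (σ ^ 2).toNNReal) := by
    apply pi_testing
      (fun j => gaussianReal (θ i₀ * η j) (σ ^ 2).toNNReal)
      (fun j => gaussianReal (θ i₀ * η' j) (σ ^ 2).toNNReal) j₀
      (fun j hj => by
        show gaussianReal (θ i₀ * η j) (σ ^ 2).toNNReal
            = gaussianReal (θ i₀ * η' j) (σ ^ 2).toNNReal
        rw [hηη' j hj])
    exact Hgauss
  have Houter := pi_testing_set
    (fun i => Measure.pi fun j => gaussianReal (θ i * η j) (σ ^ 2).toNNReal)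
    (fun i => Measure.pi fun j => gaussianReal (θ i * η' j) (σ ^ 2).toNNReal) i₀
    (fun i hi => by
      have hz : θ i = 0 := hθ i hi
      show (Measure.pi fun j => gaussianReal (θ i * η j) (σ ^ 2).toNNReal)
          = Measure.pi fun j => gaussianReal (θ i * η' j) (σ ^ 2).toNNReal
      congr 1
      funext j
      rw [hz, zero_mul, zero_mul])
    (ENNReal.ofReal (2 * Phic (Δ / σ))) Hinner A hA
  exact Houter


/-- ±1 vector attached to a boolean pattern. -/
def etaOf {n : ℕ} (s : Fin n → Bool) : Fin n → ℝ := fun l => if s l then 1 else -1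

lemma etaOf_pm {n : ℕ} (s : Fin n → Bool) : etaOf s ∈ pmOne n := by
  intro l
  unfold etaOf
  by_cases h : s l <;> simp [h]

lemma lossR_lower {n : ℕ} (hn : 0 < n) {a b : Fin n → ℝ}
    (ha : a ∈ pmOne n) (hb : b ∈ pmOne n) :
    (n : ℝ)⁻¹ * ∑ j, ∑ k, (if a j * a k ≠ b j * b k then (1:ℝ) else 0)
      ≤ lossR a b := by
  classical
  unfold lossR
  set S := ∑ j, |a j - b j| with hS
  set T := ∑ j, |a j + b j| with hT
  have hST : S + T = 2 * n := by
    rw [hS, hT, ← Finset.sum_add_distrib]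
    have hj : ∀ j : Fin n, |a j - b j| + |a j + b j| = 2 := by
      intro j
      rcases ha j with h1 | h1 <;> rcases hb j with h2 | h2 <;>
        rw [h1, h2] <;> norm_num
    rw [Finset.sum_congr rfl fun j _ => hj j]
    simp [Finset.card_univ, mul_comm]
  have hU : ∑ j, ∑ k, (if a j * a k ≠ b j * b k then (1:ℝ) else 0)
      = S * T / 2 := by
    have hptwise : ∀ j k : Fin n, (if a j * a k ≠ b j * b k then (1:ℝ) else 0)
        = (|a j - b j| * |a k + b k| + |a j + b j| * |a k - b k|) / 4 := by
      intro j k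
      rcases ha j with h1 | h1 <;> rcases ha k with h2 | h2 <;>
        rcases hb j with h3 | h3 <;> rcases hb k with h4 | h4 <;>
        rw [h1, h2, h3, h4] <;> norm_num
    calc ∑ j, ∑ k, (if a j * a k ≠ b j * b k then (1:ℝ) else 0)
        = ∑ j, ∑ k, (|a j - b j| * |a k + b k| + |a j + b j| * |a k - b k|) / 4 :=
          Finset.sum_congr rfl fun j _ => Finset.sum_congr rfl fun k _ => hptwise j k
      _ = ∑ j, (|a j - b j| * T + |a j + b j| * S) / 4 := by
          refine Finset.sum_congr rfl fun j _ => ?_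
          rw [← Finset.sum_div, Finset.sum_add_distrib, ← Finset.mul_sum,
            ← Finset.mul_sum]
      _ = (S * T + T * S) / 4 := by
          rw [← Finset.sum_div, Finset.sum_add_distrib, ← Finset.sum_mul,
            ← Finset.sum_mul]
      _ = S * T / 2 := by ring
  have hS0 : 0 ≤ S := Finset.sum_nonneg fun j _ => abs_nonneg _
  have hT0 : 0 ≤ T := Finset.sum_nonneg fun j _ => abs_nonneg _
  have hnpos : (0:ℝ) < n := by exact_mod_cast hn
  rw [hU, inv_mul_le_iff₀ hnpos]
  rcases le_total S T with h | h
  · rw [min_eq_left h]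
    nlinarith [sq_nonneg S]
  · rw [min_eq_right h]
    nlinarith [sq_nonneg T]

lemma lossR_bound {n : ℕ} {a b : Fin n → ℝ} (ha : a ∈ pmOne n) (hb : b ∈ pmOne n) :
    0 ≤ lossR a b ∧ lossR a b ≤ 2 * n := by
  unfold lossR
  constructor
  · exact le_min (Finset.sum_nonneg fun j _ => abs_nonneg _)
      (Finset.sum_nonneg fun j _ => abs_nonneg _)
  · refine (min_le_left _ _).trans ?_
    calc ∑ j, |a j - b j| ≤ ∑ _j : Fin n, 2 := by
          refine Finset.sum_le_sum fun j _ => ?_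
          rcases ha j with h1 | h1 <;> rcases hb j with h2 | h2 <;>
            rw [h1, h2] <;> norm_num
      _ = 2 * n := by simp [Finset.card_univ, mul_comm]

lemma measurable_lossR {p n : ℕ} {f : (Fin p → Fin n → ℝ) → Fin n → ℝ}
    (hf : Measurable f) (η : Fin n → ℝ) :
    Measurable fun y => lossR (f y) η := by
  unfold lossR
  apply Measurable.min
  · exact Finset.measurable_sum _ fun j _ =>
      (((measurable_pi_apply j).comp hf).sub measurable_const).abs
  · exact Finset.measurable_sum _ fun j _ =>
      (((measurable_pi_apply j).comp hf).add measurable_const).abs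

lemma measurable_pair_set {p n : ℕ} {f : (Fin p → Fin n → ℝ) → Fin n → ℝ}
    (hf : Measurable f) (j k : Fin n) (c : ℝ) :
    MeasurableSet {y : Fin p → Fin n → ℝ | f y j * f y k ≠ c} := by
  have hm : Measurable fun y => f y j * f y k :=
    ((measurable_pi_apply j).comp hf).mul ((measurable_pi_apply k).comp hf)
  exact (hm (measurableSet_singleton c)).compl

lemma risk_lower {p n : ℕ} (hn : 0 < n) {σ : ℝ}
    {f : (Fin p → Fin n → ℝ) → Fin n → ℝ} (hf : Measurable f)
    (hfpm : ∀ y, f y ∈ pmOne n) (θ : Fin p → ℝ) {η : Fin n → ℝ}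
    (hη : η ∈ pmOne n) :
    (n : ℝ)⁻¹ * ∑ j, ∑ k,
        (lawY p n σ θ η {y | f y j * f y k ≠ η j * η k}).toReal
      ≤ risk p n σ f θ η := by
  classical
  have hprob := lawY_isProb p n σ θ η
  have hAmeas : ∀ j k : Fin n, MeasurableSet {y : Fin p → Fin n → ℝ |
      f y j * f y k ≠ η j * η k} := fun j k => measurable_pair_set hf j k _
  have hint_ind : ∀ j k : Fin n,
      Integrable (Set.indicator {y : Fin p → Fin n → ℝ |
        f y j * f y k ≠ η j * η k} (fun _ => (1:ℝ))) (lawY p n σ θ η) :=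
    fun j k => (integrable_const (1:ℝ)).indicator (hAmeas j k)
  have hIntSum : ∀ j : Fin n, Integrable (fun y =>
      ∑ k, Set.indicator {y' : Fin p → Fin n → ℝ |
        f y' j * f y' k ≠ η j * η k} (fun _ => (1:ℝ)) y) (lawY p n σ θ η) :=
    fun j => integrable_finset_sum _ fun k _ => hint_ind j k
  have hIntSum2 : Integrable (fun y => ∑ j,
      ∑ k, Set.indicator {y' : Fin p → Fin n → ℝ |
        f y' j * f y' k ≠ η j * η k} (fun _ => (1:ℝ)) y) (lawY p n σ θ η) :=
    integrable_finset_sum _ fun j _ => hIntSum j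
  have hloss_int : Integrable (fun y => lossR (f y) η) (lawY p n σ θ η) := by
    refine Integrable.mono' (integrable_const (2 * n : ℝ))
      ((measurable_lossR hf η).aestronglyMeasurable) ?_
    refine Filter.Eventually.of_forall fun y => ?_
    rw [Real.norm_eq_abs, abs_of_nonneg (lossR_bound (hfpm y) hη).1]
    exact (lossR_bound (hfpm y) hη).2
  have e : (∫ y, (n:ℝ)⁻¹ * ∑ j, ∑ k, Set.indicator {y' : Fin p → Fin n → ℝ |
        f y' j * f y' k ≠ η j * η k} (fun _ => (1:ℝ)) y ∂(lawY p n σ θ η))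
      = (n : ℝ)⁻¹ * ∑ j, ∑ k,
        (lawY p n σ θ η {y | f y j * f y k ≠ η j * η k}).toReal := by
    rw [MeasureTheory.integral_const_mul]
    congr 1
    rw [integral_finset_sum _ (fun j _ => hIntSum j)]
    refine Finset.sum_congr rfl fun j _ => ?_
    rw [integral_finset_sum _ (fun k _ => hint_ind j k)]
    refine Finset.sum_congr rfl fun k _ => ?_
    rw [integral_indicator_const (1:ℝ) (hAmeas j k), smul_eq_mul, mul_one]
    rfl
  rw [← e]
  refine integral_mono (hIntSum2.const_mul _) hloss_int fun y => ?_
  refine le_trans (le_of_eq ?_) (lossR_lower hn (hfpm y) hη)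
  congr 1
  refine Finset.sum_congr rfl fun j _ => Finset.sum_congr rfl fun k _ => ?_
  by_cases h : f y j * f y k ≠ η j * η k <;>
    simp [Set.indicator_apply, Set.mem_setOf_eq, h]

lemma sum_flip_lower {p n : ℕ} {σ Δ : ℝ} (hσ : 0 < σ) (hΔ : 0 < Δ)
    {f : (Fin p → Fin n → ℝ) → Fin n → ℝ} (hf : Measurable f)
    (i₀ : Fin p) (θ : Fin p → ℝ)
    (hθ : ∀ i, i ≠ i₀ → θ i = 0) (hθ0 : θ i₀ = Δ)
    (j k : Fin n) (hjk : j ≠ k) :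
    (Fintype.card (Fin n → Bool) : ℝ) * Phic (Δ / σ) ≤
      ∑ s : Fin n → Bool, (lawY p n σ θ (etaOf s)
        {y | f y j * f y k ≠ etaOf s j * etaOf s k}).toReal := by
  classical
  set A : (Fin n → Bool) → Set (Fin p → Fin n → ℝ) :=
    fun s => {y | f y j * f y k ≠ etaOf s j * etaOf s k} with hA
  set F : (Fin n → Bool) → ℝ := fun s => (lawY p n σ θ (etaOf s) (A s)).toReal
    with hFdef
  set flip : (Fin n → Bool) → (Fin n → Bool) :=
    fun s => Function.update s j (!(s j)) with hflipdef
  have hinv : Function.Involutive flip := by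
    intro s
    funext l
    by_cases h : l = j
    · subst h
      simp [hflipdef, Function.update_self]
    · simp [hflipdef, Function.update_of_ne h]
  have hAmeas : ∀ s, MeasurableSet (A s) := fun s => measurable_pair_set hf j k _
  have hper : ∀ s, 2 * Phic (Δ / σ) ≤ F s + F (flip s) := by
    intro s
    have hprob1 := lawY_isProb p n σ θ (etaOf s)
    have hprob2 := lawY_isProb p n σ θ (etaOf (flip s))
    have hagree : ∀ l, l ≠ j → etaOf s l = etaOf (flip s) l := by
      intro l hl
      unfold etaOf
      rw [hflipdef]
      simp [Function.update_of_ne hl]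
    have hpmj : etaOf s j = 1 ∨ etaOf s j = -1 := etaOf_pm s j
    have hflipj : etaOf (flip s) j = - etaOf s j := by
      unfold etaOf
      rw [hflipdef]
      simp only [Function.update_self]
      by_cases h : s j <;> simp [h]
    have hkey := lawY_testing hσ hΔ i₀ θ hθ hθ0 j (etaOf s) (etaOf (flip s))
      hagree hpmj hflipj (A s) (hAmeas s)
    have hsub : (A s)ᶜ ⊆ A (flip s) := by
      intro y hy
      have hyA : f y j * f y k = etaOf s j * etaOf s k := by
        by_contra hne
        exact hy hne
      show f y j * f y k ≠ etaOf (flip s) j * etaOf (flip s) k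
      rw [hyA, hflipj, ← hagree k (Ne.symm hjk)]
      rcases etaOf_pm s j with h1 | h1 <;> rcases etaOf_pm s k with h2 | h2 <;>
        rw [h1, h2] <;> norm_num
    have hfin1 : lawY p n σ θ (etaOf s) (A s) ≠ ⊤ := measure_ne_top _ _
    have hfin2 : lawY p n σ θ (etaOf (flip s)) ((A s)ᶜ) ≠ ⊤ := measure_ne_top _ _
    calc 2 * Phic (Δ / σ)
        = (ENNReal.ofReal (2 * Phic (Δ / σ))).toReal := by
          rw [ENNReal.toReal_ofReal]
          have := phic_nonneg (Δ / σ)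
          linarith
      _ ≤ (lawY p n σ θ (etaOf s) (A s)
            + lawY p n σ θ (etaOf (flip s)) ((A s)ᶜ)).toReal :=
          ENNReal.toReal_mono (ENNReal.add_ne_top.mpr ⟨hfin1, hfin2⟩) hkey
      _ = (lawY p n σ θ (etaOf s) (A s)).toReal
            + (lawY p n σ θ (etaOf (flip s)) ((A s)ᶜ)).toReal :=
          ENNReal.toReal_add hfin1 hfin2
      _ ≤ F s + F (flip s) := by
          refine add_le_add le_rfl ?_
          exact ENNReal.toReal_mono (measure_ne_top _ _) (measure_mono hsub)
  have hsumflip : ∑ s : Fin n → Bool, F (flip s) = ∑ s : Fin n → Bool, F s := by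
    have := Equiv.sum_comp (hinv.toPerm flip) F
    simpa using this
  have hsum2 : ∑ s : Fin n → Bool, (2 * Phic (Δ / σ))
      ≤ ∑ s : Fin n → Bool, (F s + F (flip s)) :=
    Finset.sum_le_sum fun s _ => hper s
  rw [Finset.sum_add_distrib, hsumflip, Finset.sum_const, Finset.card_univ] at hsum2
  have hcard : (0:ℝ) ≤ (Fintype.card (Fin n → Bool) : ℝ) := by positivity
  have : (Fintype.card (Fin n → Bool) : ℝ) * (2 * Phic (Δ / σ)) ≤ 2 * ∑ s, F s := by
    rw [nsmul_eq_mul] at hsum2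
    linarith
  linarith

end AuxLB

/-- Proposition 1: `Ψ_Δ ≥ c Φᶜ(Δ/σ)` for an absolute constant `c > 0`. -/
theorem statement0 :
    ∃ c : ℝ, 0 < c ∧ ∀ (n p : ℕ) (σ Δ : ℝ), 2 ≤ n → 1 ≤ p → 0 < σ → 0 < Δ →
      c * Phic (Δ / σ) ≤ minimaxRisk p n σ Δ := by
  classical
  refine ⟨1/2, by norm_num, ?_⟩
  intro n p σ Δ hn hp hσ hΔ
  have hn0 : 0 < n := by omega
  have hnR : (0:ℝ) < n := by exact_mod_cast hn0
  have hp0 : 0 < p := hp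
  set i₀ : Fin p := ⟨0, hp0⟩ with hi₀
  set θ : Fin p → ℝ := fun i => if i = i₀ then Δ else 0 with hθdef
  have hθ : ∀ i, i ≠ i₀ → θ i = 0 := fun i hi => if_neg hi
  have hθ0 : θ i₀ = Δ := if_pos rfl
  have hθnorm : eucNorm θ = Δ := by
    unfold eucNorm
    have hsum : ∑ i, θ i ^ 2 = Δ ^ 2 := by
      rw [hθdef]
      calc ∑ i, (if i = i₀ then Δ else 0) ^ 2
          = ∑ i, (if i = i₀ then Δ ^ 2 else 0) := by
            refine Finset.sum_congr rfl fun i _ => ?_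
            by_cases h : i = i₀ <;> simp [h]
        _ = Δ ^ 2 := by
            rw [Finset.sum_ite_eq' Finset.univ i₀ (fun _ => Δ ^ 2)]
            simp
    rw [hsum, Real.sqrt_sq hΔ.le]
  have hPhi0 : 0 ≤ Phic (Δ / σ) := phic_nonneg _
  unfold _root_.minimaxRisk
  have hNe : Nonempty {f : (Fin p → Fin n → ℝ) → Fin n → ℝ //
      Measurable f ∧ ∀ y, f y ∈ pmOne n} :=
    ⟨⟨fun _ _ => 1, measurable_const, fun y i => Or.inl rfl⟩⟩
  refine le_ciInf fun fs => ?_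
  obtain ⟨f, hf, hfpm⟩ := fs
  -- boundedness of the sup family
  have hbd : ∀ x : Omega p n Δ, (n:ℝ)⁻¹ * risk p n σ f x.1.1 x.1.2 ≤ 2 := by
    intro x
    have hprob := lawY_isProb p n σ x.1.1 x.1.2
    have hb : ‖risk p n σ f x.1.1 x.1.2‖ ≤ 2 * n := by
      unfold risk
      have := MeasureTheory.norm_integral_le_of_norm_le_const
        (μ := lawY p n σ x.1.1 x.1.2) (f := fun y => lossR (f y) x.1.2)
        (C := 2 * n) (Filter.Eventually.of_forall fun y => by
          rw [Real.norm_eq_abs, abs_of_nonneg (lossR_bound (hfpm y) x.2.2).1]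
          exact (lossR_bound (hfpm y) x.2.2).2)
      simpa using this
    have hrle : risk p n σ f x.1.1 x.1.2 ≤ 2 * n :=
      (le_abs_self _).trans (by rwa [Real.norm_eq_abs] at hb)
    calc (n:ℝ)⁻¹ * risk p n σ f x.1.1 x.1.2
        ≤ (n:ℝ)⁻¹ * (2 * n) := by
          apply mul_le_mul_of_nonneg_left hrle
          positivity
      _ = 2 := by field_simp
  have hBdd : BddAbove (Set.range fun x : Omega p n Δ =>
      (n:ℝ)⁻¹ * risk p n σ f x.1.1 x.1.2) := by
    refine ⟨2, ?_⟩
    rintro r ⟨x, rfl⟩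
    exact hbd x
  set Sup := ⨆ x : Omega p n Δ, (n:ℝ)⁻¹ * risk p n σ f x.1.1 x.1.2 with hSup
  have hmem : ∀ s : Fin n → Bool,
      ((θ, etaOf s) : (Fin p → ℝ) × (Fin n → ℝ)) ∈ Omega p n Δ :=
    fun s => ⟨le_of_eq hθnorm.symm, etaOf_pm s⟩
  have hle : ∀ s : Fin n → Bool, (n:ℝ)⁻¹ * risk p n σ f θ (etaOf s) ≤ Sup :=
    fun s => le_ciSup hBdd (⟨(θ, etaOf s), hmem s⟩ : Omega p n Δ)
  -- lower bound the average
  set N : ℕ := Fintype.card (Fin n → Bool) with hN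
  have hNpos : (0:ℝ) < N := by
    have := Fintype.card_pos (α := Fin n → Bool)
    exact_mod_cast this
  set T : (Fin n → Bool) → Fin n → Fin n → ℝ := fun s j k =>
    (lawY p n σ θ (etaOf s) {y | f y j * f y k ≠ etaOf s j * etaOf s k}).toReal
    with hT
  have hT0 : ∀ s j k, 0 ≤ T s j k := fun s j k => ENNReal.toReal_nonneg
  have hrisk : ∀ s : Fin n → Bool,
      (n:ℝ)⁻¹ * ((n:ℝ)⁻¹ * ∑ j, ∑ k, T s j k)
        ≤ (n:ℝ)⁻¹ * risk p n σ f θ (etaOf s) := by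
    intro s
    apply mul_le_mul_of_nonneg_left _ (by positivity)
    exact risk_lower hn0 hf hfpm θ (etaOf_pm s)
  have hpair : ∀ j k : Fin n, j ≠ k → (N:ℝ) * Phic (Δ / σ) ≤ ∑ s, T s j k :=
    fun j k hjk => sum_flip_lower hσ hΔ hf i₀ θ hθ hθ0 j k hjk
  have hrowbound : ∀ j : Fin n,
      ((n:ℝ) - 1) * ((N:ℝ) * Phic (Δ / σ)) ≤ ∑ k, ∑ s, T s j k := by
    intro j
    have hterm : ∀ k : Fin n, (if j = k then (0:ℝ)
        else (N:ℝ) * Phic (Δ / σ)) ≤ ∑ s, T s j k := by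
      intro k
      by_cases h : j = k
      · simp only [h, if_pos rfl]
        exact Finset.sum_nonneg fun s _ => hT0 s k k
      · simpa [h] using hpair j k h
    calc ((n:ℝ) - 1) * ((N:ℝ) * Phic (Δ / σ))
        = ∑ k : Fin n, (if j = k then (0:ℝ) else (N:ℝ) * Phic (Δ / σ)) := by
          have : ∑ k : Fin n, (if j = k then (0:ℝ) else (N:ℝ) * Phic (Δ / σ))
              = ∑ k : Fin n, ((N:ℝ) * Phic (Δ / σ)
                - (if j = k then (N:ℝ) * Phic (Δ / σ) else 0)) := by
            refine Finset.sum_congr rfl fun k _ => ?_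
            by_cases h : j = k <;> simp [h]
          rw [this, Finset.sum_sub_distrib, Finset.sum_const,
            Finset.sum_ite_eq Finset.univ j fun _ => (N:ℝ) * Phic (Δ / σ)]
          simp [Finset.card_univ]
          ring
      _ ≤ ∑ k, ∑ s, T s j k := Finset.sum_le_sum fun k _ => hterm k
  have htotal : (n:ℝ) * (((n:ℝ) - 1) * ((N:ℝ) * Phic (Δ / σ)))
      ≤ ∑ s, ∑ j, ∑ k, T s j k := by
    rw [Finset.sum_comm]
    calc (n:ℝ) * (((n:ℝ) - 1) * ((N:ℝ) * Phic (Δ / σ)))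
        = ∑ _j : Fin n, (((n:ℝ) - 1) * ((N:ℝ) * Phic (Δ / σ))) := by
          simp [Finset.card_univ]
      _ ≤ ∑ j, ∑ s, ∑ k, T s j k := by
          refine Finset.sum_le_sum fun j _ => ?_
          rw [Finset.sum_comm]
          exact hrowbound j
  -- combine
  have havg : (N:ℝ) * ((1/2) * Phic (Δ / σ)) ≤ ∑ s : Fin n → Bool,
      (n:ℝ)⁻¹ * risk p n σ f θ (etaOf s) := by
    have h1 : ∑ s : Fin n → Bool, (n:ℝ)⁻¹ * ((n:ℝ)⁻¹ * ∑ j, ∑ k, T s j k)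
        ≤ ∑ s : Fin n → Bool, (n:ℝ)⁻¹ * risk p n σ f θ (etaOf s) :=
      Finset.sum_le_sum fun s _ => hrisk s
    have h2 : ∑ s : Fin n → Bool, (n:ℝ)⁻¹ * ((n:ℝ)⁻¹ * ∑ j, ∑ k, T s j k)
        = (n:ℝ)⁻¹ * ((n:ℝ)⁻¹ * ∑ s, ∑ j, ∑ k, T s j k) := by
      rw [← Finset.mul_sum, ← Finset.mul_sum]
    have h3 : (N:ℝ) * ((1/2) * Phic (Δ / σ))
        ≤ (n:ℝ)⁻¹ * ((n:ℝ)⁻¹ * ∑ s, ∑ j, ∑ k, T s j k) := by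
      have hhalf : (1:ℝ)/2 ≤ ((n:ℝ) - 1) / n := by
        rw [div_le_div_iff₀ (by norm_num) hnR]
        have h2n : (2:ℝ) ≤ n := by exact_mod_cast hn
        linarith
      have h4 : (n:ℝ)⁻¹ * ((n:ℝ)⁻¹ * ((n:ℝ) * (((n:ℝ) - 1)
          * ((N:ℝ) * Phic (Δ / σ)))))
          ≤ (n:ℝ)⁻¹ * ((n:ℝ)⁻¹ * ∑ s, ∑ j, ∑ k, T s j k) := by
        apply mul_le_mul_of_nonneg_left _ (by positivity)
        apply mul_le_mul_of_nonneg_left htotal (by positivity)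
      have he : (n:ℝ)⁻¹ * ((n:ℝ)⁻¹ * ((n:ℝ) * (((n:ℝ) - 1)
          * ((N:ℝ) * Phic (Δ / σ)))))
          = (((n:ℝ) - 1) / n) * ((N:ℝ) * Phic (Δ / σ)) := by
        field_simp
      refine le_trans ?_ h4
      rw [he]
      calc (N:ℝ) * ((1/2) * Phic (Δ / σ))
          ≤ (N:ℝ) * ((((n:ℝ) - 1) / n) * Phic (Δ / σ)) := by
            apply mul_le_mul_of_nonneg_left _ (by positivity)
            exact mul_le_mul_of_nonneg_right hhalf hPhi0
        _ = (((n:ℝ) - 1) / n) * ((N:ℝ) * Phic (Δ / σ)) := by ring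
    exact h3.trans (h2 ▸ h1)
  have hsum_le : ∑ s : Fin n → Bool, (n:ℝ)⁻¹ * risk p n σ f θ (etaOf s)
      ≤ (N:ℝ) * Sup := by
    calc ∑ s : Fin n → Bool, (n:ℝ)⁻¹ * risk p n σ f θ (etaOf s)
        ≤ ∑ _s : Fin n → Bool, Sup := Finset.sum_le_sum fun s _ => hle s
      _ = (N:ℝ) * Sup := by
          simp only [Finset.sum_const, nsmul_eq_mul, Finset.card_univ, hN]
  have hfinal : (N:ℝ) * ((1/2) * Phic (Δ / σ)) ≤ (N:ℝ) * Sup := havg.trans hsum_le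
  exact le_of_mul_le_mul_left hfinal hNpos

end
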